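/- Let L be a negative definite lattice with basis {E_v} coming from a connected plumbing graph, and L' its dual lattice with dual basis E*_v defined by (E*_v, E_w) = -δ_{vw}. Then every E*_u, written in the basis {E_v} over ℚ, has all coordinates strictly positive. -/
import Mathlib


/-- every dual basis element E*_u, defined by (E*_u, E_w) = -δ_{uw},
has all coordinates strictly positive in the basis {E_v}. -/
theorem stmt3 {ι : Type*} [Fintype ι] [DecidableEq ι] [Nonempty ι]
    (B : LinearMap.BilinForm ℚ (ι → ℚ))
    (hsymm : ∀ x y, B x y = B y x)
    (hneg : ∀ x : ι → ℚ, x ≠ 0 → B x x < 0)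
    (hoff : ∀ u v : ι, u ≠ v →
      B (Pi.single u 1) (Pi.single v 1) = 0 ∨ B (Pi.single u 1) (Pi.single v 1) = 1)
    (hconn : ∀ S : Set ι, S.Nonempty → S ≠ Set.univ →
      ∃ u ∈ S, ∃ v, v ∉ S ∧ 0 < B (Pi.single u 1) (Pi.single v 1))
    (u : ι) (x : ι → ℚ)
    (hx : ∀ w : ι, B x (Pi.single w 1) = if w = u then -1 else 0) :
    ∀ v, 0 < x v := by
  have hrep : ∀ y : ι → ℚ, y = ∑ v, y v • (Pi.single v 1 : ι → ℚ) := by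
    intro y
    funext j
    simp [Finset.sum_apply, Pi.single_apply]
  have expand1 : ∀ y z : ι → ℚ, B y z = ∑ v, y v * B (Pi.single v 1) z := by
    intro y z
    conv_lhs => rw [hrep y]
    simp [map_sum, LinearMap.sum_apply, smul_eq_mul]
  have expand1' : ∀ y z : ι → ℚ, B y z = ∑ w, z w * B y (Pi.single w 1) := by
    intro y z
    conv_lhs => rw [hrep z]
    simp [map_sum, smul_eq_mul]
  have expand2 : ∀ y z : ι → ℚ,
      B y z = ∑ v, ∑ w, y v * (z w * B (Pi.single v 1) (Pi.single w 1)) := by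
    intro y z
    rw [expand1 y z]
    refine Finset.sum_congr rfl fun v _ => ?_
    rw [expand1' (Pi.single v 1) z, Finset.mul_sum]
  have hoffnn : ∀ a b : ι, a ≠ b → 0 ≤ B (Pi.single a 1) (Pi.single b 1) := by
    intro a b hab
    rcases hoff a b hab with h | h <;> simp [h]
  set n : ι → ℚ := fun v => max (-(x v)) 0 with hn
  have hnnn : ∀ v, 0 ≤ n v := fun v => le_max_right _ _
  have hpnn : ∀ v, 0 ≤ x v + n v := by
    intro v; simp only [hn]
    rcases le_total (x v) 0 with h | h
    · rw [max_eq_left (by linarith)]; linarith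
    · rw [max_eq_right (by linarith)]; linarith
  have hprod : ∀ v, (x v + n v) * n v = 0 := by
    intro v; simp only [hn]
    rcases le_total (x v) 0 with h | h
    · rw [max_eq_left (by linarith)]; ring
    · rw [max_eq_right (by linarith)]; ring
  have hBxn : B x n ≤ 0 := by
    rw [expand1' x n]
    have hs : ∑ w, n w * B x (Pi.single w 1) = -(n u) := by
      simp [hx, mul_ite]
    rw [hs]
    linarith [hnnn u]
  have hBpn : 0 ≤ B (x + n) n := by
    rw [expand2]
    refine Finset.sum_nonneg fun v _ => Finset.sum_nonneg fun w _ => ?_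
    rcases eq_or_ne v w with rfl | hvw
    · simp only [Pi.add_apply]
      rw [← mul_assoc, hprod v, zero_mul]
    · exact mul_nonneg (by simpa using hpnn v) (mul_nonneg (hnnn w) (hoffnn v w hvw))
  have hn0 : n = 0 := by
    by_contra h
    have h1 := hneg n h
    have h2 : B (x + n) n = B x n + B n n := by simp
    rw [h2] at hBpn
    linarith
  have hxnn : ∀ v, 0 ≤ x v := by
    intro v
    have h1 : -(x v) ≤ n v := le_max_left _ _
    rw [congrFun hn0 v] at h1
    simp only [Pi.zero_apply] at h1
    linarith
  intro v
  by_contra hv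
  have hxv : x v = 0 := le_antisymm (not_lt.mp hv) (hxnn v)
  set S : Set ι := {w | 0 < x w} with hS
  have hSne : S.Nonempty := by
    by_contra h
    have hx0 : x = 0 := by
      funext w
      have hw : ¬ 0 < x w := fun hw => h ⟨w, hw⟩
      have := hxnn w
      simp only [Pi.zero_apply]
      linarith
    rw [hx0] at hx
    have := hx u
    simp at this
  have hSneq : S ≠ Set.univ := by
    intro h
    have hvS : v ∈ S := h ▸ Set.mem_univ v
    rw [hS] at hvS
    exact absurd hvS (by simp [hxv])
  obtain ⟨a, ha, b, hb, hab⟩ := hconn S hSne hSneq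
  have hxb : x b = 0 := le_antisymm (not_lt.mp (by simpa [hS] using hb)) (hxnn b)
  have hsum : ∑ w, x w * B (Pi.single w 1) (Pi.single b 1) ≤ 0 := by
    rw [← expand1 x (Pi.single b 1), hx b]
    split <;> norm_num
  have hterms : ∀ w ∈ Finset.univ, 0 ≤ x w * B (Pi.single w 1) (Pi.single b 1) := by
    intro w _
    rcases eq_or_ne w b with rfl | hwb
    · rw [hxb, zero_mul]
    · exact mul_nonneg (hxnn w) (hoffnn w b hwb)
  have hsum0 : ∑ w, x w * B (Pi.single w 1) (Pi.single b 1) = 0 :=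
    le_antisymm hsum (Finset.sum_nonneg hterms)
  have hzero := (Finset.sum_eq_zero_iff_of_nonneg hterms).mp hsum0 a (Finset.mem_univ a)
  have hxa : 0 < x a := ha
  exact absurd hzero (ne_of_gt (mul_pos hxa hab))
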